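/- Let q, p₁, p₂, w be real numbers with q ≠ 0. Let ℓ be the 2×2 real matrix with ℓ₁₁ = p₁, ℓ₁₂ = 1/q, ℓ₂₁ = −1/q, ℓ₂₂ = p₂. In M₂(ℝ) ⊗ M₂(ℝ), identified with 4×4 matrices via the Kronecker product with basis ordering e₁⊗e₁, e₁⊗e₂, e₂⊗e₁, e₂⊗e₂, define a = d = (1/(2q))·(−w·e₁₁⊗e₂₂ + e₁₂⊗e₂₁ − e₂₁⊗e₁₂ + w·e₂₂⊗e₁₁) and b = c = (1/(2q))·(−w·e₁₁⊗e₁₁ + e₁₂⊗e₁₂ − e₂₁⊗e₂₁ + w·e₂₂⊗e₂₂). Let B be the 4×4 matrix whose only nonzero entries are B₁₂ = p₁/q², B₁₃ = −p₁/q², B₂₁ = −p₁/q², B₂₂ = −2/q³, B₂₄ = p₂/q², B₃₁ = p₁/q², B₃₃ = 2/q³, B₃₄ = −p₂/q², B₄₂ = −p₂/q², B₄₃ = p₂/q². Then, with ℓ₁ = ℓ⊗𝟙 and ℓ₂ = 𝟙⊗ℓ, one has B = a·ℓ₁·ℓ₂ + ℓ₁·b·ℓ₂ − ℓ₂·c·ℓ₁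 − ℓ₁·ℓ₂·d. -/

import Mathlib

open Matrix Kronecker

noncomputable section

/-- `2×2` real matrices. -/
abbrev M2 : Type := Matrix (Fin 2) (Fin 2) ℝ

/-- `M₂(ℝ) ⊗ M₂(ℝ)` realized as `4×4` matrices via the Kronecker product,
with basis ordering `e₁⊗e₁, e₁⊗e₂, e₂⊗e₁, e₂⊗e₂`. -/
abbrev M4 : Type := Matrix (Fin 2 × Fin 2) (Fin 2 × Fin 2) ℝ

/-- The `2×2` elementary matrix `e_{ij}` (indices `0,1` for `1,2`). -/
def E (i j : Fin 2) : M2 := Matrix.single i j 1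

set_option maxHeartbeats 4000000 in
/-- explicit quadratic r-matrix formulation of the second Poisson
bracket of the `N = 2` rational Calogero–Moser model: the matrix `B` of second
Poisson brackets of the entries of the Lax matrix `ℓ` equals
`a ℓ₁ℓ₂ + ℓ₁ b ℓ₂ − ℓ₂ c ℓ₁ − ℓ₁ℓ₂ d`. -/
theorem stmt8 (q p₁ p₂ w : ℝ) (hq : q ≠ 0)
    (ℓ : M2) (hℓ : ℓ = !![p₁, 1 / q; -(1 / q), p₂])
    (a b c d : M4)
    (ha : a = (1 / (2 * q)) •
      (-(w • (E 0 0 ⊗ₖ E 1 1)) + E 0 1 ⊗ₖ E 1 0 - E 1 0 ⊗ₖ E 0 1 + w • (E 1 1 ⊗ₖ E 0 0)))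
    (hdm : d = a)
    (hc : c = (1 / (2 * q)) •
      (-(w • (E 0 0 ⊗ₖ E 0 0)) + E 0 1 ⊗ₖ E 0 1 - E 1 0 ⊗ₖ E 1 0 + w • (E 1 1 ⊗ₖ E 1 1)))
    (hb : b = c)
    (B : M4)
    (hB : B =
        Matrix.single (0, 0) (0, 1) (p₁ / q ^ 2)
      + Matrix.single (0, 0) (1, 0) (-(p₁ / q ^ 2))
      + Matrix.single (0, 1) (0, 0) (-(p₁ / q ^ 2))
      + Matrix.single (0, 1) (0, 1) (-(2 / q ^ 3))
      + Matrix.single (0, 1) (1, 1) (p₂ / q ^ 2)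
      + Matrix.single (1, 0) (0, 0) (p₁ / q ^ 2)
      + Matrix.single (1, 0) (1, 0) (2 / q ^ 3)
      + Matrix.single (1, 0) (1, 1) (-(p₂ / q ^ 2))
      + Matrix.single (1, 1) (0, 1) (-(p₂ / q ^ 2))
      + Matrix.single (1, 1) (1, 0) (p₂ / q ^ 2))
    (ℓ₁ ℓ₂ : M4) (hℓ₁ : ℓ₁ = ℓ ⊗ₖ (1 : M2)) (hℓ₂ : ℓ₂ = (1 : M2) ⊗ₖ ℓ) :
    B = a * ℓ₁ * ℓ₂ + ℓ₁ * b * ℓ₂ - ℓ₂ * c * ℓ₁ - ℓ₁ * ℓ₂ * d := by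
  subst hℓ ha hdm hc hb hB hℓ₁ hℓ₂
  ext ⟨i,k⟩ ⟨j,l⟩
  simp only [Matrix.mul_apply, Fintype.sum_prod_type, Fin.sum_univ_two,
    Matrix.kroneckerMap_apply, E, Matrix.single, Matrix.one_apply,
    Matrix.smul_apply, Matrix.add_apply, Matrix.sub_apply, Matrix.neg_apply,
    Matrix.of_apply, Prod.mk.injEq, smul_eq_mul]
  fin_cases i <;> fin_cases k <;> fin_cases j <;> fin_cases l <;>
    norm_num <;> field_simp <;> ring
end
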